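/- There exists an absolute constant c > 0 such that for every q ∈ ℂ with 0 < |q| ≤ e^{−π√3} and every δ ∈ ℂ with 0 < |δ| ≤ 1/2, one has | log|g₀(1 + δ)| − log|δ| − 2·∑_{n=1}^∞ log|1 − qⁿ| | ≤ c·|δ|², where g₀(t) = (t − 1)·∏_{n=1}^∞ (1 − qⁿ t)(1 − qⁿ t^{−1}). -/

import Mathlib

open Real

/-! ### Auxiliary lemmas -/

lemma aux_one_add_abs_lower (x : ℂ) : 1 - ‖x‖ ≤ ‖1 + x‖ := by
  have h := norm_add_le (1 + x) (-x)
  simp only [add_neg_cancel_right, norm_one, norm_neg] at h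
  linarith

lemma aux_ne_zero {x : ℂ} (hx : ‖x‖ ≤ 1 / 2) : (1 : ℂ) + x ≠ 0 := by
  intro h
  have h1 := aux_one_add_abs_lower x
  rw [h, norm_zero] at h1
  linarith

/-- For `|x| ≤ 1/2` one has `| log |1+x| | ≤ 2 |x|`. -/
lemma aux_log_abs {x : ℂ} (hx : ‖x‖ ≤ 1 / 2) :
    |Real.log (‖1 + x‖)| ≤ 2 * ‖x‖ := by
  set t := ‖x‖ with ht
  have ht0 : 0 ≤ t := norm_nonneg x
  have hlow : 1 - t ≤ ‖1 + x‖ := aux_one_add_abs_lower x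
  have hup : ‖1 + x‖ ≤ 1 + t := by
    have := norm_add_le 1 x
    simpa using this
  have hpos : (0 : ℝ) < 1 - t := by linarith
  rw [abs_le]
  constructor
  · -- lower bound
    have h1 : Real.log (1 - t) ≤ Real.log (‖1 + x‖) :=
      Real.log_le_log hpos hlow
    have h2 : Real.log (1 - t)⁻¹ ≤ (1 - t)⁻¹ - 1 :=
      Real.log_le_sub_one_of_pos (by positivity)
    rw [Real.log_inv] at h2
    have h3 : (1 - t)⁻¹ - 1 ≤ 2 * t := by
      rw [sub_le_iff_le_add, inv_le_iff_one_le_mul₀ hpos]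
      nlinarith
    linarith
  · -- upper bound
    have h1 : Real.log (‖1 + x‖) ≤ Real.log (1 + t) :=
      Real.log_le_log (by linarith) hup
    have h2 : Real.log (1 + t) ≤ (1 + t) - 1 :=
      Real.log_le_sub_one_of_pos (by linarith)
    linarith

lemma aux_geom_summable {r : ℝ} (h0 : 0 ≤ r) (h1 : r < 1) :
    Summable (fun n : ℕ => r ^ (n + 1)) := by
  simpa [pow_succ] using (summable_geometric_of_lt_one h0 h1).mul_right r

/-- The correction factor. -/
noncomputable def auxX (q δ : ℂ) (n : ℕ) : ℂ :=
  -(q ^ (n + 1) * δ ^ 2 / ((1 + δ) * (1 - q ^ (n + 1)) ^ 2))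

section main

variable {q δ : ℂ}

lemma aux_qpow (hq : ‖q‖ ≤ 1 / 100) (n : ℕ) :
    ‖q ^ (n + 1)‖ ≤ 1 / 100 := by
  rw [norm_pow]
  calc ‖q‖ ^ (n + 1) ≤ ‖q‖ :=
        pow_le_of_le_one (norm_nonneg q) (by linarith) (Nat.succ_ne_zero n)
  _ ≤ 1 / 100 := hq

lemma aux_b_ne (hq : ‖q‖ ≤ 1 / 100) (n : ℕ) : (1 : ℂ) - q ^ (n + 1) ≠ 0 := by
  rw [sub_eq_add_neg]
  apply aux_ne_zero
  rw [norm_neg]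
  linarith [aux_qpow hq n]

lemma aux_b_lower (hq : ‖q‖ ≤ 1 / 100) (n : ℕ) :
    99 / 100 ≤ ‖1 - q ^ (n + 1)‖ := by
  have h := aux_one_add_abs_lower (-(q ^ (n + 1)))
  rw [norm_neg] at h
  rw [sub_eq_add_neg]
  linarith [aux_qpow hq n]

lemma aux_1δ_lower (hδ : ‖δ‖ ≤ 1 / 2) : 1 / 2 ≤ ‖1 + δ‖ := by
  have h := aux_one_add_abs_lower δ
  linarith

lemma aux_1δ_ne (hδ : ‖δ‖ ≤ 1 / 2) : (1 : ℂ) + δ ≠ 0 := aux_ne_zero hδ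

lemma auxX_abs (hq : ‖q‖ ≤ 1 / 100) (hδ : ‖δ‖ ≤ 1 / 2) (n : ℕ) :
    ‖auxX q δ n‖ ≤ 4 * ‖q ^ (n + 1)‖ * ‖δ‖ ^ 2 := by
  have hEq : ‖auxX q δ n‖ =
      ‖q ^ (n + 1)‖ * ‖δ‖ ^ 2 /
        (‖1 + δ‖ * ‖1 - q ^ (n + 1)‖ ^ 2) := by
    simp [auxX, norm_div, norm_mul, norm_pow]
  rw [hEq]
  have h1 : 1 / 2 ≤ ‖1 + δ‖ := aux_1δ_lower hδ
  have h2 : 99 / 100 ≤ ‖1 - q ^ (n + 1)‖ := aux_b_lower hq n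
  have hden : (1 : ℝ) / 4 ≤ ‖1 + δ‖ * ‖1 - q ^ (n + 1)‖ ^ 2 := by
    nlinarith
  have hdenpos : (0 : ℝ) < ‖1 + δ‖ * ‖1 - q ^ (n + 1)‖ ^ 2 := by
    linarith
  rw [div_le_iff₀ hdenpos]
  have hnum : (0 : ℝ) ≤ ‖q ^ (n + 1)‖ * ‖δ‖ ^ 2 := by positivity
  nlinarith [norm_nonneg (q ^ (n + 1)), sq_nonneg (‖δ‖)]

lemma auxX_small (hq : ‖q‖ ≤ 1 / 100) (hδ : ‖δ‖ ≤ 1 / 2) (n : ℕ) :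
    ‖auxX q δ n‖ ≤ 1 / 2 := by
  have h := auxX_abs hq hδ n
  have h1 := aux_qpow hq n
  have h2 : ‖δ‖ ^ 2 ≤ 1 / 4 := by nlinarith [norm_nonneg δ]
  nlinarith [norm_nonneg (q ^ (n + 1)), sq_nonneg (‖δ‖)]

lemma aux_factor (hq : ‖q‖ ≤ 1 / 100) (hδ : ‖δ‖ ≤ 1 / 2) (n : ℕ) :
    (1 - q ^ (n + 1) * (1 + δ)) * (1 - q ^ (n + 1) * (1 + δ)⁻¹) =
      (1 + auxX q δ n) * (1 - q ^ (n + 1)) ^ 2 := by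
  have h1 : (1 : ℂ) + δ ≠ 0 := aux_1δ_ne hδ
  have h2 : (1 : ℂ) - q ^ (n + 1) ≠ 0 := aux_b_ne hq n
  rw [auxX]
  field_simp
  ring

lemma aux_expand (hδ : ‖δ‖ ≤ 1 / 2) (n : ℕ) :
    (1 - q ^ (n + 1) * (1 + δ)) * (1 - q ^ (n + 1) * (1 + δ)⁻¹) =
      1 + (-(q ^ (n + 1) * ((1 + δ) + (1 + δ)⁻¹)) + (q ^ (n + 1)) ^ 2) := by
  have h1 : (1 : ℂ) + δ ≠ 0 := aux_1δ_ne hδ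
  field_simp
  ring

end main

/-- There is an absolute constant `c > 0` such that for every `q ∈ ℂ` with
`0 < |q| ≤ e^{−π√3}` and every `δ ∈ ℂ` with `0 < |δ| ≤ 1/2`, the function
`g₀(t) = (t − 1)·∏_{n≥1} (1 − qⁿt)(1 − qⁿt⁻¹)` satisfies
`| log|g₀(1+δ)| − log|δ| − 2·∑_{n≥1} log|1 − qⁿ| | ≤ c·|δ|²`. -/
theorem log_g0_expansion_near_one :
    ∃ c : ℝ, 0 < c ∧
      ∀ q δ : ℂ, 0 < ‖q‖ →
        ‖q‖ ≤ Real.exp (-(π * Real.sqrt 3)) →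
        0 < ‖δ‖ → ‖δ‖ ≤ 1 / 2 →
          |Real.log (‖
              (((1 + δ) - 1) * ∏' n : ℕ,
                (1 - q ^ (n + 1) * (1 + δ)) * (1 - q ^ (n + 1) * (1 + δ)⁻¹))‖) -
            Real.log (‖δ‖) -
            2 * ∑' n : ℕ, Real.log (‖1 - q ^ (n + 1)‖)| ≤
          c * ‖δ‖ ^ 2 := by
  refine ⟨1, one_pos, fun q δ hq0 hqle hδ0 hδle => ?_⟩
  -- numeric bound on |q|
  have hq : ‖q‖ ≤ 1 / 100 := by
    have h5 : Real.exp (-(π * Real.sqrt 3)) ≤ Real.exp (-5) := by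
      apply Real.exp_le_exp.mpr
      have h1 : (1.7 : ℝ) ≤ Real.sqrt 3 :=
        (Real.le_sqrt (by norm_num) (by norm_num)).mpr (by norm_num)
      have h2 := Real.pi_gt_d6
      nlinarith [Real.sqrt_nonneg 3]
    have h100 : (100 : ℝ) ≤ Real.exp 5 := by
      rw [show (5 : ℝ) = (5 : ℕ) * 1 by norm_num, Real.exp_nat_mul]
      calc (100 : ℝ) ≤ 2.7182818283 ^ 5 := by norm_num
      _ ≤ Real.exp 1 ^ 5 := pow_le_pow_left₀ (by norm_num) Real.exp_one_gt_d9.le 5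
    have : Real.exp (-5) ≤ 1 / 100 := by
      rw [Real.exp_neg]
      rw [inv_le_comm₀ (Real.exp_pos 5) (by norm_num)]
      linarith
    linarith
  have hr0 : 0 ≤ ‖q‖ := norm_nonneg q
  have hr1 : ‖q‖ < 1 := lt_of_le_of_lt hq (by norm_num)
  have hd0 : 0 ≤ ‖δ‖ := norm_nonneg δ
  set A : ℕ → ℂ := fun n => (1 - q ^ (n + 1) * (1 + δ)) * (1 - q ^ (n + 1) * (1 + δ)⁻¹)
    with hA
  -- basic facts
  have hqpow : ∀ n : ℕ, ‖q ^ (n + 1)‖ = ‖q‖ ^ (n + 1) := fun n => norm_pow _ _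
  have hqpow' : ∀ n : ℕ, ‖q ^ (n + 1)‖ ≤ 1 / 100 := aux_qpow hq
  have hXsmall := auxX_small hq hδle
  have hXabs := auxX_abs hq hδle
  have hAfac : ∀ n, A n = (1 + auxX q δ n) * (1 - q ^ (n + 1)) ^ 2 := aux_factor hq hδle
  have hAne : ∀ n, A n ≠ 0 := fun n => by
    rw [hAfac n]
    exact mul_ne_zero (aux_ne_zero (hXsmall n)) (pow_ne_zero 2 (aux_b_ne hq n))
  -- summability of complex logs of A
  have hlogA_sum : Summable (fun n => Complex.log (A n)) := by
    apply Summable.of_norm_bounded (g := fun n => 6 * ‖q‖ ^ (n + 1))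
      ((aux_geom_summable hr0 hr1).mul_left 6)
    intro n
    have hZabs : ‖-(q ^ (n + 1) * ((1 + δ) + (1 + δ)⁻¹)) + (q ^ (n + 1)) ^ 2‖ ≤
        4 * ‖q‖ ^ (n + 1) := by
      have ht : ‖(1 + δ) + (1 + δ)⁻¹‖ ≤ 7 / 2 := by
        have h1 : ‖1 + δ‖ ≤ 3 / 2 := by
          have := norm_add_le 1 δ
          simp only [norm_one] at this
          linarith
        have h2 : ‖(1 + δ)⁻¹‖ ≤ 2 := by
          rw [norm_inv]
          calc (‖1 + δ‖)⁻¹ ≤ (1 / 2 : ℝ)⁻¹ := by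
                apply inv_anti₀ (by norm_num) (aux_1δ_lower hδle)
          _ = 2 := by norm_num
        calc ‖(1 + δ) + (1 + δ)⁻¹‖ ≤
            ‖1 + δ‖ + ‖(1 + δ)⁻¹‖ := norm_add_le _ _
        _ ≤ 7 / 2 := by linarith
      calc ‖-(q ^ (n + 1) * ((1 + δ) + (1 + δ)⁻¹)) + (q ^ (n + 1)) ^ 2‖ ≤
            ‖-(q ^ (n + 1) * ((1 + δ) + (1 + δ)⁻¹))‖ +
              ‖(q ^ (n + 1)) ^ 2‖ := norm_add_le _ _
      _ = ‖q ^ (n + 1)‖ * ‖(1 + δ) + (1 + δ)⁻¹‖ +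
            ‖q ^ (n + 1)‖ ^ 2 := by rw [norm_neg, norm_mul, norm_pow, norm_pow, norm_pow]
      _ ≤ 4 * ‖q‖ ^ (n + 1) := by
          have h3 := hqpow' n
          have h4 := hqpow n
          rw [h4] at h3 ⊢
          nlinarith [pow_nonneg hr0 (n + 1), norm_nonneg ((1 + δ) + (1 + δ)⁻¹),
            norm_nonneg (q ^ (n + 1))]
    have hZsmall : ‖-(q ^ (n + 1) * ((1 + δ) + (1 + δ)⁻¹)) + (q ^ (n + 1)) ^ 2‖ ≤
        1 / 2 := by
      have h3 := hqpow' n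
      rw [hqpow n] at h3
      nlinarith [hZabs]
    have hAz := aux_expand (q := q) hδle n
    rw [show A n = (1 - q ^ (n + 1) * (1 + δ)) * (1 - q ^ (n + 1) * (1 + δ)⁻¹) from rfl, hAz]
    calc ‖Complex.log (1 + (-(q ^ (n + 1) * ((1 + δ) + (1 + δ)⁻¹)) + (q ^ (n + 1)) ^ 2))‖ ≤
          3 / 2 * ‖-(q ^ (n + 1) * ((1 + δ) + (1 + δ)⁻¹)) + (q ^ (n + 1)) ^ 2‖ :=
        Complex.norm_log_one_add_half_le_self (by exact hZsmall)
    _ ≤ 3 / 2 * (4 * ‖q‖ ^ (n + 1)) := by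
        nlinarith [hZabs]
    _ = 6 * ‖q‖ ^ (n + 1) := by ring
  -- the infinite product equals the exponential of the sum of logs
  have hPexp : (∏' n, A n) = Complex.exp (∑' n, Complex.log (A n)) :=
    (Complex.cexp_tsum_eq_tprod
      (fun n => hAne n) hlogA_sum).symm
  have hPne : (∏' n, A n) ≠ 0 := by rw [hPexp]; exact Complex.exp_ne_zero _
  have hlogabsP : Real.log (‖∏' n, A n‖) =
      ∑' n, Real.log (‖A n‖) := by
    rw [hPexp, Complex.norm_exp, Real.log_exp, Complex.re_tsum hlogA_sum]
    exact tsum_congr fun n => Complex.log_re _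
  -- real summabilities
  have hsum_b : Summable (fun n => Real.log (‖1 - q ^ (n + 1)‖)) := by
    apply Summable.of_norm_bounded (g := fun n => 2 * ‖q‖ ^ (n + 1))
      ((aux_geom_summable hr0 hr1).mul_left 2)
    intro n
    rw [Real.norm_eq_abs, sub_eq_add_neg]
    have h := aux_log_abs (x := -(q ^ (n + 1))) (by rw [norm_neg]; linarith [hqpow' n])
    rw [norm_neg, hqpow n] at h
    exact h
  have hxbound : ∀ n, |Real.log (‖1 + auxX q δ n‖)| ≤
      8 * ‖δ‖ ^ 2 * ‖q‖ ^ (n + 1) := by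
    intro n
    have h := aux_log_abs (hXsmall n)
    have h2 := hXabs n
    rw [hqpow n] at h2
    calc |Real.log (‖1 + auxX q δ n‖)| ≤ 2 * ‖auxX q δ n‖ := h
    _ ≤ 2 * (4 * ‖q‖ ^ (n + 1) * ‖δ‖ ^ 2) := by linarith
    _ = 8 * ‖δ‖ ^ 2 * ‖q‖ ^ (n + 1) := by ring
  have hsum_x : Summable (fun n => Real.log (‖1 + auxX q δ n‖)) := by
    apply Summable.of_norm_bounded (g := fun n => 8 * ‖δ‖ ^ 2 * ‖q‖ ^ (n + 1))
      ((aux_geom_summable hr0 hr1).mul_left (8 * ‖δ‖ ^ 2))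
    intro n
    rw [Real.norm_eq_abs]
    exact hxbound n
  -- splitting the log of each factor
  have hlog_split : ∀ n, Real.log (‖A n‖) =
      Real.log (‖1 + auxX q δ n‖) +
        2 * Real.log (‖1 - q ^ (n + 1)‖) := by
    intro n
    have hne1 : ‖1 + auxX q δ n‖ ≠ 0 :=
      (norm_ne_zero_iff.mpr (aux_ne_zero (hXsmall n)))
    have hne2 : ‖1 - q ^ (n + 1)‖ ^ 2 ≠ 0 :=
      pow_ne_zero 2 ((norm_ne_zero_iff.mpr (aux_b_ne hq n)))
    rw [hAfac n, norm_mul, norm_pow, Real.log_mul hne1 hne2, Real.log_pow]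
    norm_num
  have hsum_a : Summable (fun n => Real.log (‖A n‖)) :=
    (hsum_x.add (hsum_b.mul_left 2)).congr (fun n => (hlog_split n).symm)
  have htsum_a : (∑' n, Real.log (‖A n‖)) =
      (∑' n, Real.log (‖1 + auxX q δ n‖)) +
        2 * ∑' n, Real.log (‖1 - q ^ (n + 1)‖) := by
    calc (∑' n, Real.log (‖A n‖)) =
        ∑' n, (Real.log (‖1 + auxX q δ n‖) +
          2 * Real.log (‖1 - q ^ (n + 1)‖)) := tsum_congr hlog_split
    _ = (∑' n, Real.log (‖1 + auxX q δ n‖)) +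
          ∑' n, 2 * Real.log (‖1 - q ^ (n + 1)‖) :=
        Summable.tsum_add hsum_x (hsum_b.mul_left 2)
    _ = _ := by rw [tsum_mul_left]
  -- final bound on the correction sum
  have hfinal : |∑' n, Real.log (‖1 + auxX q δ n‖)| ≤ ‖δ‖ ^ 2 := by
    have hnormsum : Summable (fun n => ‖Real.log (‖1 + auxX q δ n‖)‖) := by
      apply Summable.of_norm_bounded (g := fun n => 8 * ‖δ‖ ^ 2 * ‖q‖ ^ (n + 1))
        ((aux_geom_summable hr0 hr1).mul_left (8 * ‖δ‖ ^ 2))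
      intro n
      rw [norm_norm, Real.norm_eq_abs]
      exact hxbound n
    have hgsum : Summable (fun n : ℕ => 8 * ‖δ‖ ^ 2 * (1 / 100 : ℝ) ^ (n + 1)) :=
      (aux_geom_summable (by norm_num) (by norm_num)).mul_left (8 * ‖δ‖ ^ 2)
    have hle : (∑' n, ‖Real.log (‖1 + auxX q δ n‖)‖) ≤
        ∑' n : ℕ, 8 * ‖δ‖ ^ 2 * (1 / 100 : ℝ) ^ (n + 1) := by
      apply Summable.tsum_le_tsum _ hnormsum hgsum
      intro n
      rw [Real.norm_eq_abs]
      calc |Real.log (‖1 + auxX q δ n‖)| ≤ 8 * ‖δ‖ ^ 2 * ‖q‖ ^ (n + 1) := hxbound n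
      _ ≤ 8 * ‖δ‖ ^ 2 * (1 / 100 : ℝ) ^ (n + 1) := by
          have : ‖q‖ ^ (n + 1) ≤ (1 / 100 : ℝ) ^ (n + 1) := pow_le_pow_left₀ hr0 hq (n + 1)
          nlinarith [sq_nonneg (‖δ‖)]
    have hval : (∑' n : ℕ, 8 * ‖δ‖ ^ 2 * (1 / 100 : ℝ) ^ (n + 1)) = 8 * ‖δ‖ ^ 2 * (1 / 99) := by
      rw [tsum_mul_left]
      have : (∑' n : ℕ, (1 / 100 : ℝ) ^ (n + 1)) = 1 / 99 := by
        have h1 : (∑' n : ℕ, (1 / 100 : ℝ) ^ (n + 1)) =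
            ∑' n : ℕ, (1 / 100 : ℝ) * (1 / 100) ^ n := tsum_congr fun n => by ring
        rw [h1, tsum_mul_left, tsum_geometric_of_lt_one (by norm_num) (by norm_num)]
        norm_num
      rw [this]
    calc |∑' n, Real.log (‖1 + auxX q δ n‖)| ≤
        ∑' n, ‖Real.log (‖1 + auxX q δ n‖)‖ := by
          rw [← Real.norm_eq_abs]
          exact norm_tsum_le_tsum_norm hnormsum
    _ ≤ 8 * ‖δ‖ ^ 2 * (1 / 99) := by rw [← hval]; exact hle
    _ ≤ ‖δ‖ ^ 2 := by nlinarith [sq_nonneg (‖δ‖)]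
  -- assembly
  have hδne : ‖δ‖ ≠ 0 := ne_of_gt hδ0
  have hPabsne : ‖∏' n, A n‖ ≠ 0 := (norm_ne_zero_iff.mpr hPne)
  rw [show ((1 : ℂ) + δ) - 1 = δ from by ring]
  rw [show (∏' n : ℕ, (1 - q ^ (n + 1) * (1 + δ)) * (1 - q ^ (n + 1) * (1 + δ)⁻¹)) =
    ∏' n, A n from rfl]
  rw [norm_mul, Real.log_mul hδne hPabsne]
  have key : Real.log (‖δ‖) + Real.log (‖∏' n, A n‖) -
      Real.log (‖δ‖) -
      2 * ∑' n, Real.log (‖1 - q ^ (n + 1)‖) =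
      ∑' n, Real.log (‖1 + auxX q δ n‖) := by
    rw [hlogabsP, htsum_a]; ring
  rw [key, one_mul]
  exact hfinal
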